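/- arXiv:0712.2311 — 4 statements merged into one kernel-verified Lean document; each statement's English description precedes it below -/
import Mathlib

section
/- Every group homomorphism h : ℤ² → ℍˣ is conjugate to a complex representation: there exists μ ∈ ℍˣ such that μ⁻¹ h(γ) μ ∈ ℂˣ for all γ ∈ ℤ². -/
open scoped Quaternion QuaternionAlgebra

/-- The embedding of `ℂ = ℝ + ℝi` into the quaternions. -/
def toQ (z : ℂ) : Quaternion ℝ := ⟨z.re, z.im, 0, 0⟩

lemma toQ_re (z : ℂ) : (toQ z).re = z.re := rfl
lemma toQ_imI (z : ℂ) : (toQ z).imI = z.im := rfl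
lemma toQ_imJ (z : ℂ) : (toQ z).imJ = 0 := rfl
lemma toQ_imK (z : ℂ) : (toQ z).imK = 0 := rfl

lemma toQ_comb (r s : ℝ) (w : ℂ) :
    r • (1 : Quaternion ℝ) + s • toQ w = toQ ⟨r + s * w.re, s * w.im⟩ := by
  ext <;> simp [toQ_re, toQ_imI, toQ_imJ, toQ_imK]

/-- Every quaternion can be conjugated into the complex plane. -/
lemma conj_to_complex (q : Quaternion ℝ) :
    ∃ μ : Quaternion ℝ, μ ≠ 0 ∧ ∃ z : ℂ, q * μ = μ * toQ z := by
  by_cases hc : q.imJ = 0 ∧ q.imK = 0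
  · refine ⟨1, one_ne_zero, ⟨q.re, q.imI⟩, ?_⟩
    ext <;> simp [toQ_re, toQ_imI, toQ_imJ, toQ_imK, hc.1, hc.2]
  · set r : ℝ := Real.sqrt (q.imI ^ 2 + q.imJ ^ 2 + q.imK ^ 2) with hr
    have hr2 : r ^ 2 = q.imI ^ 2 + q.imJ ^ 2 + q.imK ^ 2 := by
      rw [hr, Real.sq_sqrt]; positivity
    refine ⟨⟨0, r + q.imI, q.imJ, q.imK⟩, ?_, ⟨q.re, r⟩, ?_⟩
    · intro h0
      rcases not_and_or.mp hc with hJ | hK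
      · exact hJ (congrArg QuaternionAlgebra.imJ h0)
      · exact hK (congrArg QuaternionAlgebra.imK h0)
    · set μ : Quaternion ℝ := ⟨0, r + q.imI, q.imJ, q.imK⟩ with hμ
      apply Quaternion.ext <;> simp only [Quaternion.re_mul, Quaternion.imI_mul, Quaternion.imJ_mul,
        Quaternion.imK_mul] <;> simp [hμ, toQ_re, toQ_imI, toQ_imJ, toQ_imK] <;> linarith [hr2]

/-- The centralizer of a non-real quaternion lies in its real span with 1. -/
lemma centralizer_span (a b : Quaternion ℝ)
    (ha : ¬(a.imI = 0 ∧ a.imJ = 0 ∧ a.imK = 0)) (hcomm : b * a = a * b) :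
    ∃ r s : ℝ, b = r • (1 : Quaternion ℝ) + s • a := by
  have e1 := congrArg QuaternionAlgebra.imI hcomm
  have e2 := congrArg QuaternionAlgebra.imJ hcomm
  have e3 := congrArg QuaternionAlgebra.imK hcomm
  simp only [Quaternion.imI_mul, Quaternion.imJ_mul, Quaternion.imK_mul] at e1 e2 e3
  have hd : a.imI ^ 2 + a.imJ ^ 2 + a.imK ^ 2 ≠ 0 := by
    intro h0
    exact ha ⟨by nlinarith [sq_nonneg a.imI, sq_nonneg a.imJ, sq_nonneg a.imK],
      by nlinarith [sq_nonneg a.imI, sq_nonneg a.imJ, sq_nonneg a.imK],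
      by nlinarith [sq_nonneg a.imI, sq_nonneg a.imJ, sq_nonneg a.imK]⟩
  set d := a.imI ^ 2 + a.imJ ^ 2 + a.imK ^ 2 with hdd
  set s := (a.imI * b.imI + a.imJ * b.imJ + a.imK * b.imK) / d with hs
  refine ⟨b.re - s * a.re, s, ?_⟩
  ext
  · simp [hs]
  · simp [hs]; field_simp
    linear_combination b.imI * hdd + (a.imJ/2) * e3 - (a.imK/2) * e2
  · simp [hs]; field_simp
    linear_combination b.imJ * hdd - (a.imI/2) * e3 + (a.imK/2) * e1
  · simp [hs]; field_simp
    linear_combination b.imK * hdd + (a.imI/2) * e2 - (a.imJ/2) * e1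

/-- Every homomorphism `ℤ² → ℍˣ` is conjugate to a complex representation. -/
theorem hom_Z2_to_quaternions_conjugate_complex (h : ℤ × ℤ → (Quaternion ℝ)ˣ)
    (hhom : ∀ γ γ' : ℤ × ℤ, h (γ + γ') = h γ * h γ') :
    ∃ μ : (Quaternion ℝ)ˣ, ∀ γ : ℤ × ℤ, ∃ z : ℂ, z ≠ 0 ∧
      ((μ⁻¹ * h γ * μ : (Quaternion ℝ)ˣ) : Quaternion ℝ) = toQ z := by
  have hcomm : ∀ γ γ' : ℤ × ℤ, (h γ : Quaternion ℝ) * h γ' = h γ' * h γ := by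
    intro γ γ'
    have : h γ * h γ' = h γ' * h γ := by rw [← hhom, ← hhom, add_comm]
    exact_mod_cast congrArg Units.val this
  by_cases hall : ∀ γ : ℤ × ℤ, ((h γ : Quaternion ℝ).imI = 0 ∧
      (h γ : Quaternion ℝ).imJ = 0 ∧ (h γ : Quaternion ℝ).imK = 0)
  · refine ⟨1, fun γ => ⟨⟨(h γ : Quaternion ℝ).re, 0⟩, ?_, ?_⟩⟩
    · intro h0
      apply (h γ).ne_zero
      have hre : (h γ : Quaternion ℝ).re = 0 := congrArg Complex.re h0
      obtain ⟨h1, h2, h3⟩ := hall γ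
      ext <;> simp [hre, h1, h2, h3]
    · obtain ⟨h1, h2, h3⟩ := hall γ
      simp only [inv_one, one_mul, mul_one]
      ext <;> simp [toQ, h1, h2, h3]
  · push_neg at hall
    obtain ⟨γ₀, hγ₀⟩ := hall
    obtain ⟨μ, hμ, w, hqw⟩ := conj_to_complex (h γ₀ : Quaternion ℝ)
    have hμa : μ⁻¹ * (h γ₀ : Quaternion ℝ) * μ = toQ w := by
      rw [mul_assoc, hqw, ← mul_assoc, inv_mul_cancel₀ hμ, one_mul]
    refine ⟨Units.mk0 μ hμ, fun γ => ?_⟩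
    obtain ⟨r, s, hrs⟩ := centralizer_span (h γ₀ : Quaternion ℝ) (h γ : Quaternion ℝ)
      (fun hz => hγ₀ hz.1 hz.2.1 hz.2.2) (hcomm γ γ₀)
    have hval : ((((Units.mk0 μ hμ)⁻¹ * h γ * Units.mk0 μ hμ) : (Quaternion ℝ)ˣ) : Quaternion ℝ)
        = μ⁻¹ * (h γ : Quaternion ℝ) * μ := by
      simp [Units.val_mul]
    have key : ((((Units.mk0 μ hμ)⁻¹ * h γ * Units.mk0 μ hμ) : (Quaternion ℝ)ˣ) : Quaternion ℝ)
        = toQ ⟨r + s * w.re, s * w.im⟩ := by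
      rw [hval, hrs, mul_add, add_mul, mul_smul_comm, smul_mul_assoc, mul_smul_comm,
        smul_mul_assoc, mul_one, inv_mul_cancel₀ hμ, hμa, toQ_comb]
    refine ⟨⟨r + s * w.re, s * w.im⟩, ?_, key⟩
    intro h0
    have hz : μ⁻¹ * (h γ : Quaternion ℝ) * μ = 0 := by
      rw [← hval, key, h0]; ext <;> simp [toQ]
    simp [mul_eq_zero, hμ, inv_eq_zero, (h γ).ne_zero] at hz
end

section
/- Let h, h' : Γ → ℂˣ be group homomorphisms from a group Γ into the nonzero complex numbers, viewed inside ℍˣ, such that h'(γ) = μ⁻¹ h(γ) μ for all γ ∈ Γ, for some fixed μ ∈ ℍˣ. If h is not real-valued (i.e., h(γ₀) ∉ ℝ for some γ₀), then h' = h or h' = h̄ (the pointwise complex conjugate of h). -/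
/-- If two complex representations of a group `Γ` are conjugate in `ℍˣ` and one of them
is not real valued, then they agree or are complex conjugates of each other. -/
theorem conjugate_complex_representations {Γ : Type*} [Group Γ]
    (h h' : Γ →* ℂˣ) (μ : Quaternion ℝ) (hμ : μ ≠ 0)
    (hconj : ∀ γ : Γ, toQ (h' γ) = μ⁻¹ * toQ (h γ) * μ)
    (hnr : ∃ γ₀ : Γ, ((h γ₀ : ℂ)).im ≠ 0) :
    (∀ γ : Γ, (h' γ : ℂ) = (h γ : ℂ)) ∨
    (∀ γ : Γ, (h' γ : ℂ) = (starRingEnd ℂ) (h γ : ℂ)) := by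
  set α : ℂ := ⟨μ.re, μ.imI⟩ with hαdef
  set β : ℂ := ⟨μ.imJ, μ.imK⟩ with hβdef
  have key : ∀ γ : Γ, α * (h' γ : ℂ) = (h γ : ℂ) * α ∧
      β * (starRingEnd ℂ) (h' γ : ℂ) = (h γ : ℂ) * β := by
    intro γ
    have e2 : μ * toQ (h' γ) = toQ (h γ) * μ := by
      rw [hconj γ, ← mul_assoc, ← mul_assoc, mul_inv_cancel₀ hμ, one_mul]
    rw [Quaternion.ext_iff] at e2
    obtain ⟨e1, e2', e3, e4⟩ := e2
    simp only [Quaternion.re_mul, Quaternion.imI_mul, Quaternion.imJ_mul,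
      Quaternion.imK_mul] at e1 e2' e3 e4
    simp only [toQ] at e1 e2' e3 e4
    constructor <;> rw [Complex.ext_iff] <;> constructor <;>
      simp only [Complex.mul_re, Complex.mul_im, Complex.conj_re, Complex.conj_im,
        hαdef, hβdef] <;> ring_nf <;> ring_nf at e1 e2' e3 e4 <;> linarith
  obtain ⟨γ₀, hy⟩ := hnr
  by_cases hα : α = 0
  · -- then β ≠ 0, and conjugation is complex conjugation
    have hβ : β ≠ 0 := by
      intro hβ
      apply hμ
      rw [Complex.ext_iff] at hα hβ
      simp only [hαdef, hβdef] at hα hβ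
      ext <;> simp [hα.1, hα.2, hβ.1, hβ.2] <;> rfl
    right
    intro γ
    have e := (key γ).2
    rw [mul_comm β] at e
    have e2 := mul_right_cancel₀ hβ e
    -- e2 : conj (h' γ) = (h γ)
    have := congrArg (starRingEnd ℂ) e2
    simpa using this
  · -- α ≠ 0: first show β = 0 using γ₀, then conclude h' = h
    left
    have heq : ∀ γ, (h' γ : ℂ) = (h γ : ℂ) := by
      intro γ
      have := (key γ).1
      rw [mul_comm α] at this
      exact mul_right_cancel₀ hα this
    exact heq
end

section
/- Let S : ℍ² → ℍ² be a right ℍ-linear map with S² = -Id. Then a quaternionic line L = v·ℍ (v ≠ 0) satisfies S(L) = L if and only if there exists a nonzero w ∈ L with S(w) = w·i. In particular every S-invariant quaternionic line is spanned by an 'eigenvector' of S with eigenvalue i. -/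
/-- The quaternion unit `i`. -/
def iq : Quaternion ℝ := ⟨0, 1, 0, 0⟩

private def jq : Quaternion ℝ := ⟨0, 0, 1, 0⟩

open Quaternion in
private lemma iq_sq : iq * iq = -1 := by ext <;> simp [Quaternion.re_mul, Quaternion.imI_mul, Quaternion.imJ_mul, Quaternion.imK_mul] <;> simp [iq]
open Quaternion in
private lemma jq_ne : jq ≠ 0 := by intro h; simpa [jq] using congrArg QuaternionAlgebra.imJ h
open Quaternion in
private lemma jq_comm : (-iq) * jq = jq * iq := by ext <;> simp [Quaternion.re_mul, Quaternion.imI_mul, Quaternion.imJ_mul, Quaternion.imK_mul] <;> simp [iq, jq]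

/-- For a right `ℍ`-linear `S : ℍ² → ℍ²` with `S² = -1`, a quaternionic line `v·ℍ` is
`S`-invariant iff it is spanned by an eigenvector of `S` with eigenvalue `i`. -/
theorem invariant_line_iff_eigenvector
    (S : Quaternion ℝ × Quaternion ℝ → Quaternion ℝ × Quaternion ℝ)
    (hadd : ∀ v w, S (v + w) = S v + S w)
    (hsmul : ∀ (v : Quaternion ℝ × Quaternion ℝ) (q : Quaternion ℝ),
      S (v.1 * q, v.2 * q) = ((S v).1 * q, (S v).2 * q))
    (hS2 : ∀ v, S (S v) = -v)
    (v : Quaternion ℝ × Quaternion ℝ) (hv : v ≠ 0) :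
    S '' {w | ∃ q : Quaternion ℝ, w = (v.1 * q, v.2 * q)}
        = {w | ∃ q : Quaternion ℝ, w = (v.1 * q, v.2 * q)} ↔
      ∃ w ∈ {w : Quaternion ℝ × Quaternion ℝ | ∃ q : Quaternion ℝ, w = (v.1 * q, v.2 * q)},
        w ≠ 0 ∧ S w = (w.1 * iq, w.2 * iq) := by
  constructor
  · intro hSL
    have hvL : v ∈ {w | ∃ q : Quaternion ℝ, w = (v.1 * q, v.2 * q)} := ⟨1, by simp⟩
    have hSvL : S v ∈ {w | ∃ q : Quaternion ℝ, w = (v.1 * q, v.2 * q)} := by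
      rw [← hSL]; exact ⟨v, hvL, rfl⟩
    obtain ⟨q, hq⟩ := hSvL
    have h1 : S (S v) = ((S v).1 * q, (S v).2 * q) := by
      conv_lhs => rw [hq]
      exact hsmul v q
    have h2 : (v.1 * (q * q), v.2 * (q * q)) = -v := by
      have := hS2 v
      rw [h1, hq] at this
      simpa [mul_assoc] using this
    rw [Prod.ext_iff] at h2
    have h21 : v.1 * (q * q) = -v.1 := h2.1
    have h22 : v.2 * (q * q) = -v.2 := h2.2
    have hqq : q * q = -1 := by
      by_cases h : v.1 = 0
      · have hv2 : v.2 ≠ 0 := by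
          intro h2'
          exact hv (Prod.ext h h2')
        apply mul_left_cancel₀ hv2
        rw [h22, mul_neg_one]
      · apply mul_left_cancel₀ h
        rw [h21, mul_neg_one]
    obtain ⟨u, un0, hu⟩ : ∃ u : Quaternion ℝ, u ≠ 0 ∧ q * u = u * iq := by
      by_cases hqi : q = -iq
      · exact ⟨jq, jq_ne, by rw [hqi]; exact jq_comm⟩
      · exact ⟨q + iq, fun h => hqi (eq_neg_of_add_eq_zero_left h),
          by rw [mul_add, add_mul, hqq, iq_sq, add_comm]⟩
    refine ⟨(v.1 * u, v.2 * u), ⟨u, rfl⟩, ?_, ?_⟩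
    · intro h
      rw [Prod.ext_iff] at h
      simp only [Prod.fst_zero, Prod.snd_zero, mul_eq_zero] at h
      exact hv (Prod.ext ((h.1.resolve_right un0)) ((h.2.resolve_right un0)))
    · show S (v.1 * u, v.2 * u) = ((v.1 * u) * iq, (v.2 * u) * iq)
      rw [hsmul v u, hq]
      simp only
      rw [mul_assoc, mul_assoc, hu, ← mul_assoc, ← mul_assoc]
  · rintro ⟨w, ⟨q₀, hw⟩, hwne, hSw⟩
    have hq₀ : q₀ ≠ 0 := by
      rintro rfl
      exact hwne (by rw [hw]; simp)
    have hLw : {x : Quaternion ℝ × Quaternion ℝ | ∃ q : Quaternion ℝ, x = (v.1 * q, v.2 * q)}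
        = {x | ∃ p : Quaternion ℝ, x = (w.1 * p, w.2 * p)} := by
      ext x
      constructor
      · rintro ⟨p, rfl⟩
        refine ⟨q₀⁻¹ * p, ?_⟩
        rw [hw]
        simp [mul_assoc, mul_inv_cancel₀ hq₀, ← mul_assoc, mul_inv_cancel_right₀ hq₀]
      · rintro ⟨p, rfl⟩
        exact ⟨q₀ * p, by rw [hw]; simp [mul_assoc]⟩
    rw [hLw]
    ext x
    constructor
    · rintro ⟨y, ⟨p, rfl⟩, rfl⟩
      refine ⟨iq * p, ?_⟩
      rw [hsmul w p, hSw]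
      simp [mul_assoc]
    · rintro ⟨p, rfl⟩
      refine ⟨(w.1 * (-iq * p), w.2 * (-iq * p)), ⟨-iq * p, rfl⟩, ?_⟩
      rw [hsmul w (-iq * p), hSw]
      have hip : iq * (-iq * p) = p := by
        rw [← mul_assoc, mul_neg, iq_sq]; simp
      simp only [mul_assoc, hip]
end

section
/- Let P ⊂ Im ℍ be a 2-dimensional real subspace of the imaginary quaternions, and let μ be a unit quaternion. If the right translate P·μ = {p·μ : p ∈ P} is again contained in Im ℍ, then P·μ = P. -/
open Module

noncomputable def qf (μ : Quaternion ℝ) : Quaternion ℝ →ₗ[ℝ] ℝ × ℝ where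
  toFun q := (q.re, q.imI * μ.imI + q.imJ * μ.imJ + q.imK * μ.imK)
  map_add' a b := by
    simp only [Quaternion.re_add, Quaternion.imI_add, Quaternion.imJ_add, Quaternion.imK_add,
      Prod.mk_add_mk, Prod.mk.injEq]
    exact ⟨trivial, by ring⟩
  map_smul' r a := by
    simp only [Quaternion.re_smul, Quaternion.imI_smul, Quaternion.imJ_smul, Quaternion.imK_smul,
      RingHom.id_apply, Prod.smul_mk, smul_eq_mul, Prod.mk.injEq]
    exact ⟨trivial, by ring⟩

theorem qf_surj (μ : Quaternion ℝ) (hv : ¬ (μ.imI = 0 ∧ μ.imJ = 0 ∧ μ.imK = 0)) :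
    Function.Surjective (qf μ) := by
  have hn : μ.imI ^ 2 + μ.imJ ^ 2 + μ.imK ^ 2 > 0 := by
    rcases not_and_or.mp hv with h | h
    · positivity
    rcases not_and_or.mp h with h | h <;> positivity
  intro ⟨x, y⟩
  refine ⟨⟨x, (y / (μ.imI ^ 2 + μ.imJ ^ 2 + μ.imK ^ 2)) * μ.imI,
    (y / (μ.imI ^ 2 + μ.imJ ^ 2 + μ.imK ^ 2)) * μ.imJ,
    (y / (μ.imI ^ 2 + μ.imJ ^ 2 + μ.imK ^ 2)) * μ.imK⟩, ?_⟩
  simp only [qf, LinearMap.coe_mk, AddHom.coe_mk, Prod.mk.injEq]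
  refine ⟨trivial, ?_⟩
  field_simp

/-- If a 2-plane `P ⊂ Im ℍ` is right translated by a unit quaternion `μ` into `Im ℍ`,
then `P·μ = P`. -/
theorem plane_translate_in_imaginary (P : Submodule ℝ (Quaternion ℝ))
    (hdim : Module.finrank ℝ P = 2)
    (hP : ∀ p ∈ P, p.re = 0)
    (μ : Quaternion ℝ) (hμ : Quaternion.normSq μ = 1)
    (h : ∀ p ∈ P, (p * μ).re = 0) :
    (fun p => p * μ) '' (P : Set (Quaternion ℝ)) = (P : Set (Quaternion ℝ)) := by
  have hμ0 : μ ≠ 0 := by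
    intro h0; rw [h0] at hμ; simp at hμ
  -- key: multiplication by μ maps P into P
  have hmem : ∀ p ∈ P, p * μ ∈ P := by
    by_cases hv : μ.imI = 0 ∧ μ.imJ = 0 ∧ μ.imK = 0
    · intro p hp
      have : p * μ = μ.re • p := by
        ext <;> simp [Quaternion.re_mul, Quaternion.imI_mul, Quaternion.imJ_mul,
          Quaternion.imK_mul, hv.1, hv.2.1, hv.2.2, mul_comm]
      rw [this]
      exact P.smul_mem _ hp
    · have hle : P ≤ LinearMap.ker (qf μ) := by
        intro p hp
        have h1 := hP p hp
        have h2 := h p hp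
        simp only [Quaternion.re_mul, h1] at h2
        simp only [LinearMap.mem_ker, qf, LinearMap.coe_mk, AddHom.coe_mk, h1, Prod.mk_eq_zero]
        exact ⟨trivial, by linarith⟩
      have hrank : finrank ℝ (LinearMap.ker (qf μ)) = 2 := by
        have := LinearMap.finrank_range_add_finrank_ker (qf μ)
        rw [LinearMap.range_eq_top.mpr (qf_surj μ hv)] at this
        simp only [finrank_top] at this
        have h4 : finrank ℝ (Quaternion ℝ) = 4 := Quaternion.finrank_eq_four (R := ℝ)
        have h2 : finrank ℝ (ℝ × ℝ) = 2 := by simp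
        omega
      have hPQ : P = LinearMap.ker (qf μ) :=
        Submodule.eq_of_le_of_finrank_le hle (by rw [hrank, hdim])
      intro p hp
      rw [hPQ] at hp ⊢
      simp only [LinearMap.mem_ker, qf, LinearMap.coe_mk, AddHom.coe_mk, Prod.mk_eq_zero] at hp ⊢
      obtain ⟨hp1, hp2⟩ := hp
      constructor
      · simp [Quaternion.re_mul, hp1]; linarith
      · simp only [Quaternion.imI_mul, Quaternion.imJ_mul, Quaternion.imK_mul, hp1]
        linear_combination μ.re * hp2
  -- conclude by a dimension argument
  have hinj : Function.Injective (LinearMap.mulRight ℝ μ) := by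
    intro a b hab
    simpa using mul_right_cancel₀ hμ0 hab
  have hle : P.map (LinearMap.mulRight ℝ μ) ≤ P := by
    rintro _ ⟨p, hp, rfl⟩
    exact hmem p hp
  have hfr : finrank ℝ (P.map (LinearMap.mulRight ℝ μ)) = 2 := by
    rw [← hdim]
    exact (LinearEquiv.finrank_eq (Submodule.equivMapOfInjective _ hinj P)).symm
  have : P.map (LinearMap.mulRight ℝ μ) = P :=
    Submodule.eq_of_le_of_finrank_le hle (by rw [hfr, hdim])
  calc (fun p => p * μ) '' (P : Set (Quaternion ℝ))
      = ↑(P.map (LinearMap.mulRight ℝ μ)) := by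
        rw [Submodule.map_coe]; rfl
    _ = ↑P := by rw [this]
end
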